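/- Let n be a positive integer, 1 ≤ p ≤ q < ∞, β ∈ ℝ, and let Ω ⊊ ℝⁿ be a nonempty open set with nonempty complement. Assume there exists a constant C₁ > 0 such that ∫_E d(x,Ωᶜ)^{(q/p)(n−p+β)−n} dx ≤ C₁ · cap_{p,β}(E,Ω)^{q/p} for every set E ⋐ Ω. Then the (q,p,β)-Hardy–Sobolev inequality holds in Ω with constant C = 4·C₁^{1/q}. -/

import Mathlib

open MeasureTheory Metric Set
open scoped ENNReal NNReal
open Filter
open scoped Topology

noncomputable section

/-- The distance from `x` to the complement of `Ω`. -/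
def distC {n : ℕ} (Ω : Set (EuclideanSpace ℝ (Fin n))) (x : EuclideanSpace ℝ (Fin n)) : ℝ :=
  Metric.infDist x Ωᶜ

/-- The distance between two sets. -/
def sDist {n : ℕ} (E F : Set (EuclideanSpace ℝ (Fin n))) : ℝ :=
  sInf (Set.image2 dist E F)

/-- A function is admissible for `Ω` if it is Lipschitz and has compact support contained
in `Ω`. -/
def Admissible {n : ℕ} (Ω : Set (EuclideanSpace ℝ (Fin n)))
    (u : EuclideanSpace ℝ (Fin n) → ℝ) : Prop :=
  (∃ K : NNReal, LipschitzWith K u) ∧ HasCompactSupport u ∧ tsupport u ⊆ Ω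

/-- `E` is compactly contained in `Ω`: `E` is bounded and has positive distance to `Ωᶜ`. -/
def CptIn {n : ℕ} (E Ω : Set (EuclideanSpace ℝ (Fin n))) : Prop :=
  Bornology.IsBounded E ∧ 0 < sDist E Ωᶜ

/-- The weighted `p`-energy of `u` on `Ω` with the distance weight `d(x,Ωᶜ)^β`. -/
def energy {n : ℕ} (p β : ℝ) (Ω : Set (EuclideanSpace ℝ (Fin n)))
    (u : EuclideanSpace ℝ (Fin n) → ℝ) : ℝ≥0∞ :=
  ∫⁻ x in Ω, ENNReal.ofReal (‖fderiv ℝ u x‖ ^ p * distC Ω x ^ β)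

/-- The weighted relative `(p,β)`-capacity of `E` in `Ω`. -/
def wcap {n : ℕ} (p β : ℝ) (E Ω : Set (EuclideanSpace ℝ (Fin n))) : ℝ≥0∞ :=
  ⨅ (u : EuclideanSpace ℝ (Fin n) → ℝ)
    (_ : Admissible Ω u ∧ ∀ x ∈ E, 1 ≤ u x), energy p β Ω u

/-- The `(q,p,β)`-Hardy–Sobolev inequality holds in `Ω` with constant `C`. -/
def HardySobolev {n : ℕ} (q p β : ℝ) (Ω : Set (EuclideanSpace ℝ (Fin n))) (C : ℝ) : Prop :=
  ∀ u : EuclideanSpace ℝ (Fin n) → ℝ, Admissible Ω u →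
    (∫⁻ x in Ω, ENNReal.ofReal
        (|u x| ^ q * distC Ω x ^ (q / p * ((n : ℝ) - p + β) - n))) ^ (1 / q) ≤
      ENNReal.ofReal C * (energy p β Ω u) ^ (1 / p)

/-- If `|f y - f z| ≤ L |g y - g z|` everywhere and both are differentiable at `x`,
then `‖fderiv f x‖ ≤ L * ‖fderiv g x‖`. -/
lemma fderiv_norm_le_of_abs_sub_le {X : Type*} [NormedAddCommGroup X] [NormedSpace ℝ X]
    {f g : X → ℝ} {L : ℝ} (hL : 0 ≤ L)
    (hfg : ∀ y z, |f y - f z| ≤ L * |g y - g z|) {x : X}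
    (hg : DifferentiableAt ℝ g x) (hf : DifferentiableAt ℝ f x) :
    ‖fderiv ℝ f x‖ ≤ L * ‖fderiv ℝ g x‖ := by
  refine ContinuousLinearMap.opNorm_le_bound _ (by positivity) fun h => ?_
  have hline : HasDerivAt (fun t : ℝ => x + t • h) h 0 := by
    simpa using ((hasDerivAt_id (0:ℝ)).smul_const h).const_add x
  have hx0 : x + (0:ℝ) • h = x := by simp
  have hφ : HasDerivAt (fun t : ℝ => f (x + t • h)) (fderiv ℝ f x h) 0 := by
    have hf' : HasFDerivAt f (fderiv ℝ f x) (x + (0:ℝ) • h) := by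
      rw [hx0]; exact hf.hasFDerivAt
    exact hf'.comp_hasDerivAt 0 hline
  have hψ : HasDerivAt (fun t : ℝ => g (x + t • h)) (fderiv ℝ g x h) 0 := by
    have hg' : HasFDerivAt g (fderiv ℝ g x) (x + (0:ℝ) • h) := by
      rw [hx0]; exact hg.hasFDerivAt
    exact hg'.comp_hasDerivAt 0 hline
  have h1 : Tendsto (fun t : ℝ => |slope (fun t : ℝ => f (x + t • h)) 0 t|)
      (𝓝[≠] 0) (𝓝 |fderiv ℝ f x h|) :=
    (hasDerivAt_iff_tendsto_slope.mp hφ).abs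
  have h2 : Tendsto (fun t : ℝ => L * |slope (fun t : ℝ => g (x + t • h)) 0 t|)
      (𝓝[≠] 0) (𝓝 (L * |fderiv ℝ g x h|)) :=
    (hasDerivAt_iff_tendsto_slope.mp hψ).abs.const_mul L
  have key : |fderiv ℝ f x h| ≤ L * |fderiv ℝ g x h| := by
    refine le_of_tendsto_of_tendsto' h1 h2 fun t => ?_
    simp only [slope_def_field, div_eq_mul_inv]
    rw [abs_mul, abs_mul, ← mul_assoc]
    exact mul_le_mul_of_nonneg_right (hfg _ _) (abs_nonneg _)
  calc ‖fderiv ℝ f x h‖ = |fderiv ℝ f x h| := rfl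
    _ ≤ L * |fderiv ℝ g x h| := key
    _ ≤ L * (‖fderiv ℝ g x‖ * ‖h‖) := by
        gcongr
        exact (fderiv ℝ g x).le_opNorm h
    _ = L * ‖fderiv ℝ g x‖ * ‖h‖ := by ring

lemma tsum_rpow_le_rpow_tsum' {a : ℤ → ℝ≥0∞} {r : ℝ} (hr : 1 ≤ r) :
    ∑' j, a j ^ r ≤ (∑' j, a j) ^ r := by
  have hr0 : 0 < r := lt_of_lt_of_le one_pos hr
  set S := ∑' j, a j with hS
  rcases eq_or_ne S 0 with h0 | h0
  · have : ∀ j, a j = 0 := by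
      intro j
      exact le_antisymm (h0 ▸ ENNReal.le_tsum j) (by simp)
    simp [this, ENNReal.zero_rpow_of_pos hr0]
  rcases eq_or_ne S ⊤ with htop | htop
  · rw [htop, ENNReal.top_rpow_of_pos hr0]
    exact le_top
  have key : ∀ j, a j ^ r ≤ a j * S ^ (r - 1) := by
    intro j
    rcases eq_or_ne (a j) 0 with hj | hj
    · simp [hj, ENNReal.zero_rpow_of_pos hr0]
    · have hjt : a j ≠ ⊤ := fun h => htop (top_le_iff.mp (h ▸ ENNReal.le_tsum j))
      calc a j ^ r = a j ^ (1 + (r - 1)) := by ring_nf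
        _ = a j ^ (1:ℝ) * a j ^ (r - 1) := ENNReal.rpow_add _ _ hj hjt
        _ ≤ a j * S ^ (r - 1) := by
            rw [ENNReal.rpow_one]
            gcongr
            exact ENNReal.le_tsum j
  calc ∑' j, a j ^ r ≤ ∑' j, a j * S ^ (r - 1) := ENNReal.tsum_le_tsum key
    _ = S * S ^ (r - 1) := by rw [ENNReal.tsum_mul_right]
    _ = S ^ (1:ℝ) * S ^ (r - 1) := by rw [ENNReal.rpow_one]
    _ = S ^ r := by rw [← ENNReal.rpow_add _ _ h0 htop]; ring_nf

/-- The key capacity bound via the truncated test function. -/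
lemma wcap_le_test {n : ℕ} {Ω : Set (EuclideanSpace ℝ (Fin n))}
    {u : EuclideanSpace ℝ (Fin n) → ℝ} {K : ℝ≥0} (hK : LipschitzWith K u)
    (hcs : HasCompactSupport u) (hsupp : tsupport u ⊆ Ω)
    {p β : ℝ} (hp : 1 ≤ p) {c : ℝ} (hc : 0 < c) :
    wcap p β {x | 2 * c ≤ |u x|} Ω ≤ ENNReal.ofReal (c⁻¹ ^ p) *
      ∫⁻ x in {x | c < |u x| ∧ |u x| < 2 * c},
        ENNReal.ofReal (‖fderiv ℝ u x‖ ^ p * distC Ω x ^ β) := by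
  have hp0 : (0:ℝ) < p := lt_of_lt_of_le one_pos hp
  set v : EuclideanSpace ℝ (Fin n) → ℝ := fun x => min 1 (max ((|u x| - c) / c) 0) with hv
  set B : Set (EuclideanSpace ℝ (Fin n)) := {x | c < |u x| ∧ |u x| < 2 * c} with hB
  have hvc : ∀ y z, |v y - v z| ≤ c⁻¹ * |u y - u z| := by
    intro y z
    have h1 : |v y - v z| ≤ |max ((|u y| - c) / c) 0 - max ((|u z| - c) / c) 0| := by
      rw [hv]
      simp only
      rw [min_comm 1 _, min_comm 1 _]
      simpa using abs_min_sub_min_le_max (max ((|u y| - c) / c) 0) 1 (max ((|u z| - c) / c) 0) 1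
    have h2 : |max ((|u y| - c) / c) 0 - max ((|u z| - c) / c) 0| ≤
        |(|u y| - c) / c - (|u z| - c) / c| := abs_max_sub_max_le_abs _ _ _
    have h3 : |(|u y| - c) / c - (|u z| - c) / c| = abs (|u y| - |u z|) / c := by
      rw [div_sub_div_same, abs_div, abs_of_pos hc]
      ring_nf
    have h4 : abs (|u y| - |u z|) ≤ |u y - u z| := abs_abs_sub_abs_le_abs_sub _ _
    calc |v y - v z| ≤ abs (|u y| - |u z|) / c := by rw [← h3]; exact h1.trans h2
      _ ≤ |u y - u z| / c := by gcongr
      _ = c⁻¹ * |u y - u z| := by ring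
  have hlipv : LipschitzWith (c⁻¹.toNNReal * K) v := by
    apply LipschitzWith.of_dist_le_mul
    intro x y
    rw [Real.dist_eq]
    calc |v x - v y| ≤ c⁻¹ * |u x - u y| := hvc x y
      _ = c⁻¹ * dist (u x) (u y) := by rw [Real.dist_eq]
      _ ≤ c⁻¹ * (K * dist x y) :=
          mul_le_mul_of_nonneg_left (hK.dist_le_mul x y) (inv_nonneg.2 hc.le)
      _ = (c⁻¹.toNNReal * K : ℝ≥0) * dist x y := by
          push_cast
          rw [Real.coe_toNNReal _ (inv_nonneg.2 hc.le)]
          ring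
  have hvz : ∀ x, u x = 0 → v x = 0 := by
    intro x hx
    have h0 : (|u x| - c) / c ≤ 0 := by
      apply div_nonpos_of_nonpos_of_nonneg _ hc.le
      rw [hx, abs_zero]; linarith
    show min 1 (max ((|u x| - c) / c) 0) = 0
    rw [max_eq_right h0, min_eq_right zero_le_one]
  -- Admissibility of v
  have hsuppv : Function.support v ⊆ Function.support u := fun x hx h => hx (hvz x h)
  have hAdm : Admissible Ω v :=
    ⟨⟨_, hlipv⟩, hcs.mono hsuppv, (closure_mono hsuppv).trans hsupp⟩
  have hone : ∀ x ∈ {x : EuclideanSpace ℝ (Fin n) | 2 * c ≤ |u x|}, 1 ≤ v x := by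
    intro x hx
    have hx' : 2 * c ≤ |u x| := hx
    have h1 : (1:ℝ) ≤ (|u x| - c) / c := (one_le_div hc).2 (by linarith)
    exact le_min le_rfl (le_trans h1 (le_max_left _ _))
  set G : EuclideanSpace ℝ (Fin n) → ℝ≥0∞ :=
    fun x => ENNReal.ofReal (‖fderiv ℝ u x‖ ^ p * distC Ω x ^ β) with hG
  have hae : ∀ᵐ x : EuclideanSpace ℝ (Fin n),
      ENNReal.ofReal (‖fderiv ℝ v x‖ ^ p * distC Ω x ^ β) ≤
        B.indicator (fun x => ENNReal.ofReal (c⁻¹ ^ p) * G x) x := by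
    filter_upwards [hK.ae_differentiableAt (μ := volume),
      hlipv.ae_differentiableAt (μ := volume)] with x hux hvx
    by_cases hxB : x ∈ B
    · rw [Set.indicator_of_mem hxB, hG]
      have hle : ‖fderiv ℝ v x‖ ≤ c⁻¹ * ‖fderiv ℝ u x‖ :=
        fderiv_norm_le_of_abs_sub_le (inv_nonneg.2 hc.le) hvc hux hvx
      rw [← ENNReal.ofReal_mul (by positivity)]
      apply ENNReal.ofReal_le_ofReal
      have hd : (0:ℝ) ≤ distC Ω x ^ β := Real.rpow_nonneg Metric.infDist_nonneg β
      calc ‖fderiv ℝ v x‖ ^ p * distC Ω x ^ β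
          ≤ (c⁻¹ * ‖fderiv ℝ u x‖) ^ p * distC Ω x ^ β := by
            apply mul_le_mul_of_nonneg_right _ hd
            exact Real.rpow_le_rpow (norm_nonneg _) hle hp0.le
        _ = c⁻¹ ^ p * (‖fderiv ℝ u x‖ ^ p * distC Ω x ^ β) := by
            rw [Real.mul_rpow (inv_nonneg.2 hc.le) (norm_nonneg _)]; ring
    · rw [Set.indicator_of_notMem hxB]
      have hzero : fderiv ℝ v x = 0 := by
        rcases not_and_or.mp hxB with h | h
        · push_neg at h
          have hvx0 : v x = 0 := by
            have h0 : (|u x| - c) / c ≤ 0 :=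
              div_nonpos_of_nonpos_of_nonneg (by linarith) hc.le
            show min 1 (max ((|u x| - c) / c) 0) = 0
            rw [max_eq_right h0, min_eq_right zero_le_one]
          have hmin : IsLocalMin v x := Filter.Eventually.of_forall fun y => by
            rw [hvx0]; exact le_min zero_le_one (le_max_right _ _)
          exact hmin.fderiv_eq_zero
        · push_neg at h
          have hvx1 : v x = 1 := by
            have h1 : (1:ℝ) ≤ (|u x| - c) / c := (one_le_div hc).2 (by linarith)
            show min 1 (max ((|u x| - c) / c) 0) = 1
            exact min_eq_left (le_trans h1 (le_max_left _ _))
          have hmax : IsLocalMax v x := Filter.Eventually.of_forall fun y => by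
            rw [hvx1]; exact min_le_left _ _
          exact hmax.fderiv_eq_zero
      rw [hzero]
      simp [Real.zero_rpow hp0.ne']
  have hBmeas : MeasurableSet B := by
    have hcont : Continuous fun x : EuclideanSpace ℝ (Fin n) => |u x| := hK.continuous.abs
    exact ((isOpen_lt continuous_const hcont).inter
      (isOpen_lt hcont continuous_const)).measurableSet
  have hcap : wcap p β {x | 2 * c ≤ |u x|} Ω ≤ energy p β Ω v :=
    iInf_le_of_le v (iInf_le _ ⟨hAdm, hone⟩)
  refine hcap.trans ?_
  calc energy p β Ω v
      ≤ ∫⁻ x in Ω, B.indicator (fun x => ENNReal.ofReal (c⁻¹ ^ p) * G x) x :=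
        lintegral_mono_ae (ae_restrict_of_ae hae)
    _ ≤ ∫⁻ x, B.indicator (fun x => ENNReal.ofReal (c⁻¹ ^ p) * G x) x :=
        setLIntegral_le_lintegral _ _
    _ = ∫⁻ x in B, ENNReal.ofReal (c⁻¹ ^ p) * G x := lintegral_indicator hBmeas _
    _ = ENNReal.ofReal (c⁻¹ ^ p) * ∫⁻ x in B, G x :=
        lintegral_const_mul' _ _ ENNReal.ofReal_ne_top

/-- The Maz'ya-type capacity estimate implies the Hardy–Sobolev inequality with
constant `4 * C₁ ^ (1/q)`. -/
theorem stmt2 {n : ℕ} (hn : 0 < n) (p q β : ℝ) (hp : 1 ≤ p) (hpq : p ≤ q)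
    (Ω : Set (EuclideanSpace ℝ (Fin n))) (hΩopen : IsOpen Ω) (hΩne : Ω.Nonempty)
    (hΩcne : Ωᶜ.Nonempty) (C₁ : ℝ) (hC₁ : 0 < C₁)
    (hMaz : ∀ E : Set (EuclideanSpace ℝ (Fin n)), CptIn E Ω →
      (∫⁻ x in E, ENNReal.ofReal (distC Ω x ^ (q / p * ((n : ℝ) - p + β) - n))) ≤
        ENNReal.ofReal C₁ * (wcap p β E Ω) ^ (q / p)) :
    HardySobolev q p β Ω (4 * C₁ ^ (1 / q)) := by
  have hp0 : (0:ℝ) < p := lt_of_lt_of_le one_pos hp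
  have hq0 : (0:ℝ) < q := lt_of_lt_of_le hp0 hpq
  have hr1 : (1:ℝ) ≤ q / p := (one_le_div hp0).2 hpq
  have hr0 : (0:ℝ) ≤ q / p := by positivity
  intro u hu
  obtain ⟨⟨K, hK⟩, hcs, hsupp⟩ := hu
  set γ : ℝ := q / p * ((n : ℝ) - p + β) - n with hγ
  set g : EuclideanSpace ℝ (Fin n) → ℝ≥0∞ :=
    fun x => ENNReal.ofReal (|u x| ^ q * distC Ω x ^ γ) with hg
  set w : EuclideanSpace ℝ (Fin n) → ℝ≥0∞ :=
    fun x => ENNReal.ofReal (distC Ω x ^ γ) with hw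
  set F : EuclideanSpace ℝ (Fin n) → ℝ≥0∞ :=
    fun x => ENNReal.ofReal (‖fderiv ℝ u x‖ ^ p * distC Ω x ^ β) with hF
  set D : ℤ → Set (EuclideanSpace ℝ (Fin n)) :=
    fun j => {x | (2:ℝ) ^ j ≤ |u x| ∧ |u x| < (2:ℝ) ^ (j + 1)} with hD
  set B : ℤ → Set (EuclideanSpace ℝ (Fin n)) :=
    fun j => {x | (2:ℝ) ^ (j - 1) < |u x| ∧ |u x| < (2:ℝ) ^ j} with hB
  set a : ℤ → ℝ≥0∞ := fun j => ∫⁻ x in B j, F x with ha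
  have hucont : Continuous u := hK.continuous
  have habs : Continuous fun x : EuclideanSpace ℝ (Fin n) => |u x| := hucont.abs
  have hDmeas : ∀ j, MeasurableSet (D j) := fun j =>
    ((isClosed_le continuous_const habs).measurableSet.inter
      (isOpen_lt habs continuous_const).measurableSet)
  have hBmeas : ∀ j, MeasurableSet (B j) := fun j =>
    ((isOpen_lt continuous_const habs).inter (isOpen_lt habs continuous_const)).measurableSet
  have hDdisj : Pairwise (Function.onFun Disjoint D) := by
    intro j k hjk
    rcases hjk.lt_or_gt with h | h
    all_goals {
      apply Set.disjoint_left.2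
      intro x hxj hxk
      have h1 := hxj.1
      have h2 := hxj.2
      have h3 := hxk.1
      have h4 := hxk.2
      first
      | · have : (2:ℝ) ^ (j + 1) ≤ (2:ℝ) ^ k :=
            zpow_le_zpow_right₀ one_le_two (by omega)
          linarith
      | · have : (2:ℝ) ^ (k + 1) ≤ (2:ℝ) ^ j :=
            zpow_le_zpow_right₀ one_le_two (by omega)
          linarith }
  have hBdisj : Pairwise (Function.onFun Disjoint B) := by
    intro j k hjk
    rcases hjk.lt_or_gt with h | h
    · apply Set.disjoint_left.2
      intro x hxj hxk
      have : (2:ℝ) ^ j ≤ (2:ℝ) ^ (k - 1) :=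
        zpow_le_zpow_right₀ one_le_two (by omega)
      linarith [hxj.2, hxk.1]
    · apply Set.disjoint_left.2
      intro x hxj hxk
      have : (2:ℝ) ^ k ≤ (2:ℝ) ^ (j - 1) :=
        zpow_le_zpow_right₀ one_le_two (by omega)
      linarith [hxj.1, hxk.2]
  -- step 1 : decompose the integral
  have hgzero : ∀ x, u x = 0 → g x = 0 := by
    intro x hx
    rw [hg]
    simp only [hx, abs_zero, Real.zero_rpow hq0.ne', zero_mul, ENNReal.ofReal_zero]
  have hgind : ∀ x, g x ≤ (⋃ j, D j).indicator g x := by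
    intro x
    by_cases hx : x ∈ ⋃ j, D j
    · rw [Set.indicator_of_mem hx]
    · rw [Set.indicator_of_notMem hx]
      have hux : u x = 0 := by
        by_contra h
        have : 0 < |u x| := abs_pos.2 h
        obtain ⟨j, h1, h2⟩ := exists_mem_Ico_zpow this one_lt_two
        exact hx (Set.mem_iUnion.2 ⟨j, h1, h2⟩)
      rw [hgzero x hux]
  have step1 : (∫⁻ x in Ω, g x) ≤ ∑' j, ∫⁻ x in D j, g x := by
    calc ∫⁻ x in Ω, g x ≤ ∫⁻ x in Ω, (⋃ j, D j).indicator g x := lintegral_mono hgind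
      _ ≤ ∫⁻ x, (⋃ j, D j).indicator g x := setLIntegral_le_lintegral _ _
      _ = ∫⁻ x in ⋃ j, D j, g x := lintegral_indicator (MeasurableSet.iUnion hDmeas) _
      _ = ∑' j, ∫⁻ x in D j, g x := lintegral_iUnion hDmeas hDdisj _
  -- the per-level estimate
  have key : ∀ j : ℤ, (∫⁻ x in D j, g x) ≤ ENNReal.ofReal (C₁ * 4 ^ q) * a j ^ (q / p) := by
    intro j
    set c : ℝ := (2:ℝ) ^ (j - 1) with hc
    have hcpos : (0:ℝ) < c := zpow_pos two_pos _
    have hcinv : (0:ℝ) < c⁻¹ := inv_pos.2 hcpos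
    have h4c : (0:ℝ) < 4 * c := by linarith
    have h2c : (2:ℝ) ^ j = 2 * c := by
      rw [hc, show j = 1 + (j - 1) from by ring, zpow_add₀ (two_ne_zero) 1 (j - 1)]
      norm_num
    have hM : (2:ℝ) ^ (j + 1) = 4 * c := by
      rw [hc, show j + 1 = 2 + (j - 1) from by ring, zpow_add₀ (two_ne_zero) 2 (j - 1)]
      norm_num
    set E' : Set (EuclideanSpace ℝ (Fin n)) := {x | 2 * c ≤ |u x|} with hE'
    have hBj : B j = {x | c < |u x| ∧ |u x| < 2 * c} := by
      rw [hB]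
      simp only [← h2c, ← hc]
    have hwcap : wcap p β E' Ω ≤ ENNReal.ofReal (c⁻¹ ^ p) * a j := by
      have h := wcap_le_test (β := β) hK hcs hsupp hp hcpos
      rw [ha]
      simp only
      rw [hBj, hF]
      exact h
    have hEw : (∫⁻ x in E', w x) ≤ ENNReal.ofReal C₁ * wcap p β E' Ω ^ (q / p) := by
      rcases Set.eq_empty_or_nonempty E' with hE | hE
      · rw [hE]
        simp
      · apply hMaz
        have hEsub : E' ⊆ tsupport u := by
          intro x hx
          have hne : u x ≠ 0 := by
            intro h
            have hx' : 2 * c ≤ |u x| := hx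
            rw [h, abs_zero] at hx'
            linarith
          exact subset_closure hne
        refine ⟨(hcs.isBounded).subset hEsub, ?_⟩
        obtain ⟨x₁, hx₁⟩ := hE
        obtain ⟨x₀, hx₀K, hx₀min⟩ := IsCompact.exists_isMinOn hcs ⟨x₁, hEsub hx₁⟩
          (continuous_infDist_pt (Ωᶜ)).continuousOn
        have hx₀pos : 0 < infDist x₀ Ωᶜ :=
          (hΩopen.isClosed_compl.notMem_iff_infDist_pos hΩcne).1
            (fun h => h (hsupp hx₀K))
        show 0 < sInf (Set.image2 dist E' (Ωᶜ))
        apply lt_of_lt_of_le hx₀pos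
        apply le_csInf (Set.Nonempty.image2 ⟨x₁, hx₁⟩ hΩcne)
        rintro d ⟨y, hyE, z, hz, rfl⟩
        calc infDist x₀ Ωᶜ ≤ infDist y Ωᶜ := (isMinOn_iff.1 hx₀min) y (hEsub hyE)
          _ ≤ dist y z := infDist_le_dist_of_mem hz
    have stepA : (∫⁻ x in D j, g x) ≤ ENNReal.ofReal ((4 * c) ^ q) * ∫⁻ x in E', w x := by
      calc (∫⁻ x in D j, g x)
          ≤ ∫⁻ x in D j, ENNReal.ofReal ((4 * c) ^ q) * w x := by
            apply setLIntegral_mono' (hDmeas j)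
            intro x hx
            rw [hg, hw]
            simp only
            rw [← ENNReal.ofReal_mul (Real.rpow_nonneg h4c.le q)]
            apply ENNReal.ofReal_le_ofReal
            apply mul_le_mul_of_nonneg_right _ (Real.rpow_nonneg Metric.infDist_nonneg γ)
            apply Real.rpow_le_rpow (abs_nonneg _) _ hq0.le
            rw [← hM]
            exact hx.2.le
        _ = ENNReal.ofReal ((4 * c) ^ q) * ∫⁻ x in D j, w x :=
            lintegral_const_mul' _ _ ENNReal.ofReal_ne_top
        _ ≤ ENNReal.ofReal ((4 * c) ^ q) * ∫⁻ x in E', w x := by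
            apply mul_le_mul_right
            apply lintegral_mono_set
            intro x hx
            show 2 * c ≤ |u x|
            rw [← h2c]
            exact hx.1
    calc (∫⁻ x in D j, g x)
        ≤ ENNReal.ofReal ((4 * c) ^ q) * ∫⁻ x in E', w x := stepA
      _ ≤ ENNReal.ofReal ((4 * c) ^ q) * (ENNReal.ofReal C₁ * wcap p β E' Ω ^ (q / p)) :=
          mul_le_mul_right hEw _
      _ ≤ ENNReal.ofReal ((4 * c) ^ q) * (ENNReal.ofReal C₁ *
            (ENNReal.ofReal (c⁻¹ ^ p) * a j) ^ (q / p)) :=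
          mul_le_mul_right (mul_le_mul_right (ENNReal.rpow_le_rpow hwcap hr0) _) _
      _ = ENNReal.ofReal (C₁ * 4 ^ q) * a j ^ (q / p) := by
          rw [ENNReal.mul_rpow_of_nonneg _ _ hr0,
            ENNReal.ofReal_rpow_of_pos (Real.rpow_pos_of_pos hcinv p),
            ← Real.rpow_mul hcinv.le, show p * (q / p) = q from by field_simp,
            ← mul_assoc, ← mul_assoc,
            ← ENNReal.ofReal_mul (Real.rpow_nonneg h4c.le q),
            ← ENNReal.ofReal_mul (by positivity)]
          congr 2
          rw [mul_comm ((4 * c) ^ q) C₁, mul_assoc, ← Real.mul_rpow h4c.le hcinv.le,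
            mul_inv_cancel_right₀ hcpos.ne' (4:ℝ)]
  -- sum of the pieces of the energy
  have hsum_a : ∑' j, a j ≤ energy p β Ω u := by
    have hBsub : (⋃ j, B j) ⊆ Ω := by
      intro x hx
      obtain ⟨j, hj⟩ := Set.mem_iUnion.1 hx
      have hpos : 0 < |u x| := lt_trans (zpow_pos two_pos _) hj.1
      exact hsupp (subset_closure (abs_pos.1 hpos))
    calc ∑' j, a j = ∫⁻ x in ⋃ j, B j, F x := (lintegral_iUnion hBmeas hBdisj _).symm
      _ ≤ ∫⁻ x in Ω, F x := lintegral_mono_set hBsub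
  -- put everything together
  have main : (∫⁻ x in Ω, g x) ≤
      ENNReal.ofReal (C₁ * 4 ^ q) * (energy p β Ω u) ^ (q / p) := by
    calc (∫⁻ x in Ω, g x) ≤ ∑' j, ∫⁻ x in D j, g x := step1
      _ ≤ ∑' j, ENNReal.ofReal (C₁ * 4 ^ q) * a j ^ (q / p) := ENNReal.tsum_le_tsum key
      _ = ENNReal.ofReal (C₁ * 4 ^ q) * ∑' j, a j ^ (q / p) := ENNReal.tsum_mul_left
      _ ≤ ENNReal.ofReal (C₁ * 4 ^ q) * (∑' j, a j) ^ (q / p) :=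
          mul_le_mul_right (tsum_rpow_le_rpow_tsum' hr1) _
      _ ≤ ENNReal.ofReal (C₁ * 4 ^ q) * (energy p β Ω u) ^ (q / p) :=
          mul_le_mul_right (ENNReal.rpow_le_rpow hsum_a hr0) _
  have final := ENNReal.rpow_le_rpow main (le_of_lt (by positivity : (0:ℝ) < 1 / q))
  refine final.trans (le_of_eq ?_)
  rw [ENNReal.mul_rpow_of_nonneg _ _ (by positivity), ← ENNReal.rpow_mul]
  congr 1
  · rw [ENNReal.ofReal_rpow_of_pos (by positivity)]
    congr 1
    rw [Real.mul_rpow hC₁.le (by positivity), ← Real.rpow_mul (by norm_num : (0:ℝ) ≤ 4),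
      mul_one_div_cancel hq0.ne', Real.rpow_one, mul_comm]
  · congr 1
    field_simp
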